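/- Let A be a unital infinite-dimensional K-algebra. Then A is properly left algebraically amenable if and only if for every ε > 0 and every finite F ⊆ A there exists a left (F,ε)-Følner subspace containing the unit 1_A. -/

import Mathlib

/-- `W` is a left `(F, ε)`-Følner subspace: a nonzero finite-dimensional subspace with
`dim(aW + W) ≤ (1+ε)·dim W` for all `a ∈ F`. -/
def IsFolnerSubspace (K : Type*) {A : Type*} [Field K] [NonUnitalRing A] [Module K A]
    [SMulCommClass K A A] [IsScalarTower K A A]
    (F : Finset A) (ε : ℝ) (W : Submodule K A) : Prop :=
  W ≠ ⊥ ∧ FiniteDimensional K W ∧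
    ∀ a ∈ F, (Module.finrank K ↥(W.map (LinearMap.mulLeft K a) ⊔ W) : ℝ) ≤
      (1 + ε) * (Module.finrank K ↥W : ℝ)

/-- Left algebraic amenability. -/
def AlgAmenable (K A : Type*) [Field K] [NonUnitalRing A] [Module K A]
    [SMulCommClass K A A] [IsScalarTower K A A] : Prop :=
  ∀ ε > (0:ℝ), ∀ F : Finset A, ∃ W : Submodule K A, IsFolnerSubspace K F ε W

/-- Proper left algebraic amenability. -/
def ProperlyAlgAmenable (K A : Type*) [Field K] [NonUnitalRing A] [Module K A]
    [SMulCommClass K A A] [IsScalarTower K A A] : Prop :=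
  ∀ ε > (0:ℝ), ∀ F : Finset A, ∃ W : Submodule K A,
    IsFolnerSubspace K F ε W ∧ ∀ a ∈ F, a ∈ W

open Module Submodule

/-- Counting lemma: rank of `W ⊔ S.sup U` when each `U c` contains `W`. -/
lemma folner_count {K A : Type*} [Field K] [Ring A] [Algebra K A]
    (W : Submodule K A) [FiniteDimensional K W] (U : A → Submodule K A) (S : Finset A)
    (hle : ∀ c ∈ S, W ≤ U c) (hfd : ∀ c ∈ S, FiniteDimensional K (U c)) :
    FiniteDimensional K ↥(W ⊔ S.sup U) ∧
      finrank K ↥(W ⊔ S.sup U) + S.card * finrank K W ≤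
        finrank K W + ∑ c ∈ S, finrank K (U c) := by
  classical
  induction S using Finset.induction_on with
  | empty =>
    simp only [Finset.sup_empty, sup_bot_eq, Finset.card_empty, Finset.sum_empty,
      Nat.zero_mul, Nat.add_zero]
    have h0 : W ⊔ (∅ : Finset A).sup U = W := by
      rw [Finset.sup_empty, sup_bot_eq]
    exact ⟨by rw [h0]; infer_instance, by rw [h0]⟩
  | @insert c S hc ih =>
    obtain ⟨ihfd, ihle⟩ := ih (fun x hx => hle x (Finset.mem_insert_of_mem hx))
      (fun x hx => hfd x (Finset.mem_insert_of_mem hx))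
    have hUc : FiniteDimensional K (U c) := hfd c (Finset.mem_insert_self c S)
    have heq : W ⊔ (insert c S).sup U = U c ⊔ (W ⊔ S.sup U) := by
      rw [Finset.sup_insert, ← sup_assoc, ← sup_assoc, sup_comm W (U c)]
    have hfd' : FiniteDimensional K ↥(W ⊔ (insert c S).sup U) := by
      rw [heq]; exact Submodule.finiteDimensional_sup _ _
    refine ⟨hfd', ?_⟩
    have key := Submodule.finrank_sup_add_finrank_inf_eq (U c) (W ⊔ S.sup U)
    have hW : W ≤ U c ⊓ (W ⊔ S.sup U) :=
      le_inf (hle c (Finset.mem_insert_self c S)) le_sup_left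
    have hinf : FiniteDimensional K ↥(U c ⊓ (W ⊔ S.sup U)) :=
      Submodule.finiteDimensional_inf_left _ _
    have hWinf : finrank K W ≤ finrank K ↥(U c ⊓ (W ⊔ S.sup U)) :=
      Submodule.finrank_mono hW
    rw [Finset.sum_insert hc, Finset.card_insert_of_notMem hc]
    have hfr : finrank K ↥(W ⊔ (insert c S).sup U) = finrank K ↥(U c ⊔ (W ⊔ S.sup U)) := by
      rw [heq]
    rw [hfr]
    have hrw : (S.card + 1) * finrank K W = S.card * finrank K W + finrank K W := by ring
    omega

theorem stmt9 {K A : Type*} [Field K] [Ring A] [Algebra K A]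
    (hinf : ¬ FiniteDimensional K A) :
    ProperlyAlgAmenable K A ↔
      ∀ ε > (0:ℝ), ∀ F : Finset A,
        ∃ W : Submodule K A, IsFolnerSubspace K F ε W ∧ (1 : A) ∈ W := by
  classical
  constructor
  · intro h ε hε F
    obtain ⟨W, ⟨hne, hfd, hfol⟩, hmem⟩ := h ε hε (insert 1 F)
    exact ⟨W, ⟨hne, hfd, fun a ha => hfol a (Finset.mem_insert_of_mem ha)⟩,
      hmem 1 (Finset.mem_insert_self 1 F)⟩
  · intro h ε hε F
    set n := F.card with hn
    have hε' : (0:ℝ) < ε / (2 * n + 1) := by positivity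
    set F' : Finset A := F ∪ Finset.image₂ (· * ·) F F with hF'
    obtain ⟨W, ⟨hne, hfd, hfol⟩, hone⟩ := h _ hε' F'
    set d := finrank K W with hd
    set M : A → Submodule K A := fun c => W.map (LinearMap.mulLeft K c) ⊔ W with hM
    have hWM : ∀ c, W ≤ M c := fun c => le_sup_right
    have hMfd : ∀ c, FiniteDimensional K (M c) := fun c => by
      have : FiniteDimensional K (W.map (LinearMap.mulLeft K c)) :=
        Module.Finite.map _ _
      exact Submodule.finiteDimensional_sup _ _
    set W' : Submodule K A := W ⊔ F.sup M with hW'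
    obtain ⟨hW'fd, _⟩ := folner_count W M F (fun c _ => hWM c) (fun c _ => hMfd c)
    have hWle : W ≤ W' := le_sup_left
    have hdle : d ≤ finrank K W' := Submodule.finrank_mono hWle
    refine ⟨W', ⟨?_, hW'fd, ?_⟩, fun a ha => ?_⟩
    · intro hbot
      exact hne (le_bot_iff.mp (hbot ▸ hWle))
    · intro a ha
      set C : Finset A := insert a (F ∪ F.image (a * ·)) with hC
      have hCF' : ∀ c ∈ C, c ∈ F' := by
        intro c hc
        rcases Finset.mem_insert.mp hc with rfl | hc
        · exact Finset.mem_union_left _ ha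
        rcases Finset.mem_union.mp hc with hc | hc
        · exact Finset.mem_union_left _ hc
        · obtain ⟨b, hb, rfl⟩ := Finset.mem_image.mp hc
          exact Finset.mem_union_right _ (Finset.mem_image₂_of_mem ha hb)
      have hmap : ∀ b ∈ F, (M b).map (LinearMap.mulLeft K a) ≤ W ⊔ C.sup M := by
        intro b hb
        rw [hM]
        simp only [Submodule.map_sup]
        apply sup_le
        · rw [← Submodule.map_comp, ← LinearMap.mulLeft_mul]
          have hab : a * b ∈ C := by
            rw [hC]
            exact Finset.mem_insert_of_mem
              (Finset.mem_union_right _ (Finset.mem_image_of_mem _ hb))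
          exact le_trans (le_sup_left : _ ≤ M (a * b))
            (le_sup_of_le_right (Finset.le_sup (f := M) hab))
        · have haC : a ∈ C := by rw [hC]; exact Finset.mem_insert_self _ _
          exact le_trans (le_sup_left : _ ≤ M a)
            (le_sup_of_le_right (Finset.le_sup (f := M) haC))
      have hsub : W'.map (LinearMap.mulLeft K a) ⊔ W' ≤ W ⊔ C.sup M := by
        apply sup_le
        · rw [hW', Submodule.map_sup]
          apply sup_le
          · have haC : a ∈ C := by rw [hC]; exact Finset.mem_insert_self _ _
            exact le_trans (le_sup_left : _ ≤ M a)
              (le_sup_of_le_right (Finset.le_sup (f := M) haC))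
          · rw [Finset.sup_eq_iSup, Submodule.map_iSup]
            refine iSup_le fun b => ?_
            rw [Submodule.map_iSup]
            exact iSup_le fun hb => hmap b hb
        · rw [hW']
          apply sup_le le_sup_left
          refine le_sup_of_le_right (Finset.sup_mono fun x hx => ?_)
          exact Finset.mem_insert_of_mem (Finset.mem_union_left _ hx)
      obtain ⟨hCfd, hCle⟩ := folner_count W M C (fun c _ => hWM c) (fun c _ => hMfd c)
      have hrank1 : finrank K ↥(W'.map (LinearMap.mulLeft K a) ⊔ W') ≤
          finrank K ↥(W ⊔ C.sup M) := Submodule.finrank_mono hsub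
      -- real bound
      have hCcard : (C.card : ℝ) ≤ 2 * n + 1 := by
        have h1 : C.card ≤ (F ∪ F.image (a * ·)).card + 1 := Finset.card_insert_le _ _
        have h2 : (F ∪ F.image (a * ·)).card ≤ F.card + (F.image (a * ·)).card :=
          Finset.card_union_le _ _
        have h3 : (F.image (a * ·)).card ≤ F.card := Finset.card_image_le
        have : C.card ≤ 2 * n + 1 := by omega
        exact_mod_cast this
      have hsum : (∑ c ∈ C, (finrank K (M c) : ℝ)) ≤ C.card * ((1 + ε / (2 * n + 1)) * d) := by
        calc (∑ c ∈ C, (finrank K (M c) : ℝ))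
            ≤ ∑ _c ∈ C, (1 + ε / (2 * n + 1)) * d := by
              apply Finset.sum_le_sum
              intro c hc
              exact hfol c (hCF' c hc)
          _ = C.card * ((1 + ε / (2 * n + 1)) * d) := by
              rw [Finset.sum_const, nsmul_eq_mul]
      have hd0 : (0:ℝ) ≤ d := Nat.cast_nonneg _
      have hmain : (finrank K ↥(W ⊔ C.sup M) : ℝ) ≤ (1 + ε) * d := by
        have hCle' : (finrank K ↥(W ⊔ C.sup M) : ℝ) + C.card * d ≤
            d + ∑ c ∈ C, (finrank K (M c) : ℝ) := by
          have h := hCle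
          have := (Nat.cast_le (α := ℝ)).mpr h
          push_cast at this
          convert this using 2
        have : (finrank K ↥(W ⊔ C.sup M) : ℝ) ≤
            d + C.card * (ε / (2 * n + 1) * d) := by
          nlinarith [hsum, hCle']
        have h2 : (C.card : ℝ) * (ε / (2 * n + 1) * d) ≤ (2 * n + 1) * (ε / (2 * n + 1) * d) := by
          apply mul_le_mul_of_nonneg_right hCcard
          positivity
        have h3 : ((2 * n + 1) : ℝ) * (ε / (2 * n + 1) * d) = ε * d := by
          field_simp
        nlinarith
      calc (finrank K ↥(W'.map (LinearMap.mulLeft K a) ⊔ W') : ℝ)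
          ≤ finrank K ↥(W ⊔ C.sup M) := by exact_mod_cast hrank1
        _ ≤ (1 + ε) * d := hmain
        _ ≤ (1 + ε) * finrank K W' := by
            apply mul_le_mul_of_nonneg_left _ (by linarith)
            exact_mod_cast hdle
    · have h1 : a ∈ W.map (LinearMap.mulLeft K a) := ⟨1, hone, mul_one a⟩
      have h2 : a ∈ M a := (le_sup_left : W.map (LinearMap.mulLeft K a) ≤ M a) h1
      have h3 : M a ≤ W' := le_sup_of_le_right (Finset.le_sup ha)
      exact h3 h2
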